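/- arXiv:2303.02569 — 10 statements merged into one kernel-verified Lean document; each statement's English description precedes it below -/
import Mathlib

section
/- Let β > 1 be a real number and let f : ℝ → ℝ be differentiable and convex on (0, ∞). Then the relaxed function f̃_β is continuous on (0, ∞), convex on (0, ∞), and satisfies f̃_β(1) = 0. -/
/-- The asymmetrically-relaxed function `f̃_β`: equals `f(u) + C_{f,β}` for `u ≥ β`
and the linearization `f'(β)·u − f'(β)` for `u < β`, where
`C_{f,β} = −f(β) + f'(β)·(β − 1)`. -/
noncomputable def relaxed (f : ℝ → ℝ) (β : ℝ) (u : ℝ) : ℝ :=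
  if β ≤ u then f u + (-(f β) + deriv f β * (β - 1))
  else deriv f β * u - deriv f β

theorem stmt0 (β : ℝ) (hβ : 1 < β) (f : ℝ → ℝ)
    (hdiff : DifferentiableOn ℝ f (Set.Ioi 0))
    (hconv : ConvexOn ℝ (Set.Ioi 0) f) :
    ContinuousOn (relaxed f β) (Set.Ioi 0) ∧
    ConvexOn ℝ (Set.Ioi 0) (relaxed f β) ∧
    relaxed f β 1 = 0 := by
  have hβ0 : (0 : ℝ) < β := lt_trans one_pos hβ
  set d : ℝ := deriv f β with hd
  set C : ℝ := -(f β) + d * (β - 1) with hC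
  have hfd : ∀ x ∈ Set.Ioi (0 : ℝ), DifferentiableAt ℝ f x := fun x hx =>
    hdiff.differentiableAt (isOpen_Ioi.mem_nhds hx)
  have hmono : MonotoneOn (deriv f) (Set.Ioi 0) := hconv.monotoneOn_deriv hfd
  -- the candidate derivative of `relaxed f β`
  set G : ℝ → ℝ := fun u => if β ≤ u then deriv f u else d with hG
  have hline : ∀ u : ℝ, HasDerivAt (fun x : ℝ => d * x - d) d u := by
    intro u
    simpa using ((hasDerivAt_id u).const_mul d).sub_const d
  have key : ∀ u ∈ Set.Ioi (0 : ℝ), HasDerivAt (relaxed f β) (G u) u := by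
    intro u hu
    rcases lt_trichotomy u β with h | h | h
    · -- `u < β` : equal to the line near `u`
      have hev : relaxed f β =ᶠ[nhds u] fun x => d * x - d := by
        filter_upwards [isOpen_Iio.mem_nhds h] with v hv
        simp [relaxed, not_le.mpr (Set.mem_Iio.mp hv), hd]
      have : HasDerivAt (relaxed f β) d u := (hline u).congr_of_eventuallyEq hev
      simpa [hG, not_le.mpr h] using this
    · -- `u = β` : glue one-sided derivatives
      rw [h] at hu ⊢
      have hfu : HasDerivAt f d β := (hfd β hu).hasDerivAt
      have hright : HasDerivWithinAt (relaxed f β) d (Set.Ici β) β := by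
        refine ((hfu.add_const C).hasDerivWithinAt).congr ?_ ?_
        · intro v hv
          simp [relaxed, Set.mem_Ici.mp hv, hd, hC]
        · simp [relaxed, le_refl, hd, hC]
      have hleft : HasDerivWithinAt (relaxed f β) d (Set.Iic β) β := by
        refine ((hline β).hasDerivWithinAt).congr ?_ ?_
        · intro v hv
          rcases eq_or_lt_of_le (Set.mem_Iic.mp hv) with rfl | hv'
          · simp only [relaxed, le_refl, if_pos, hd, hC]
            ring
          · simp [relaxed, not_le.mpr hv', hd]
        · simp only [relaxed, le_refl, if_pos, hd, hC]
          ring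
      have := hleft.union hright
      rw [Set.Iic_union_Ici, hasDerivWithinAt_univ] at this
      simpa [hG, le_refl, hd] using this
    · -- `β < u`
      have hev : relaxed f β =ᶠ[nhds u] fun x => f x + C := by
        filter_upwards [isOpen_Ioi.mem_nhds h] with v hv
        simp [relaxed, (Set.mem_Ioi.mp hv).le, hC, hd]
      have hfu : HasDerivAt f (deriv f u) u := (hfd u hu).hasDerivAt
      have : HasDerivAt (relaxed f β) (deriv f u) u :=
        (hfu.add_const C).congr_of_eventuallyEq hev
      simpa [hG, h.le] using this
  have hcont : ContinuousOn (relaxed f β) (Set.Ioi 0) := fun u hu =>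
    ((key u hu).differentiableAt.continuousAt).continuousWithinAt
  have hderiv : ∀ u ∈ Set.Ioi (0 : ℝ), deriv (relaxed f β) u = G u := fun u hu =>
    (key u hu).deriv
  refine ⟨hcont, ?_, ?_⟩
  · refine MonotoneOn.convexOn_of_deriv (convex_Ioi 0) hcont ?_ ?_
    · rw [interior_Ioi]
      exact fun u hu => (key u hu).differentiableAt.differentiableWithinAt
    · rw [interior_Ioi]
      intro x hx y hy hxy
      rw [hderiv x hx, hderiv y hy]
      simp only [hG]
      by_cases hbx : β ≤ x
      · rw [if_pos hbx, if_pos (hbx.trans hxy)]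
        exact hmono (lt_of_lt_of_le hβ0 hbx) (lt_of_lt_of_le hβ0 (hbx.trans hxy)) hxy
      · rw [if_neg hbx]
        by_cases hby : β ≤ y
        · rw [if_pos hby]
          exact hmono hβ0 (lt_of_lt_of_le hβ0 hby) hby
        · rw [if_neg hby]
  · simp only [relaxed]
    rw [if_neg (not_le.mpr hβ)]
    ring
end

section
/- Let β > 1, let f : ℝ → ℝ be differentiable and convex on (0, ∞), let μ be a measure on a measurable space X, and let p, q : X → ℝ be measurable with p ≥ 0, q > 0 pointwise, p and q integrable with ∫ p dμ = ∫ q dμ = 1. If the function x ↦ q(x)·f̃_β(p(x)/q(x)) is μ-integrable, then D_{f̃_β}(p‖q) ≥ 0. -/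
open MeasureTheory

lemma relaxed_ge (f : ℝ → ℝ) (β : ℝ) (hβ : 1 < β)
    (hdiff : DifferentiableOn ℝ f (Set.Ioi 0))
    (hconv : ConvexOn ℝ (Set.Ioi 0) f) (u : ℝ) :
    deriv f β * (u - 1) ≤ relaxed f β u := by
  unfold relaxed
  split_ifs with h
  · rcases eq_or_lt_of_le h with rfl | hlt
    · ring_nf
      exact le_refl _
    · have hβ0 : β ∈ Set.Ioi (0:ℝ) := by simp; linarith
      have hu0 : u ∈ Set.Ioi (0:ℝ) := by simp; linarith
      have hd : DifferentiableAt ℝ f β :=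
        hdiff.differentiableAt (Ioi_mem_nhds (by linarith))
      have := hconv.deriv_le_slope hβ0 hu0 hlt hd
      rw [slope_def_field] at this
      have h' : deriv f β * (u - β) ≤ f u - f β :=
        (le_div_iff₀ (by linarith)).mp this
      nlinarith [h']
  · linarith

theorem stmt2 {X : Type*} [MeasurableSpace X] (μ : Measure X)
    (β : ℝ) (hβ : 1 < β) (f : ℝ → ℝ)
    (hdiff : DifferentiableOn ℝ f (Set.Ioi 0))
    (hconv : ConvexOn ℝ (Set.Ioi 0) f)
    (p q : X → ℝ) (hpm : Measurable p) (hqm : Measurable q)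
    (hp0 : ∀ x, 0 ≤ p x) (hq0 : ∀ x, 0 < q x)
    (hpint : Integrable p μ) (hqint : Integrable q μ)
    (hpsum : ∫ x, p x ∂μ = 1) (hqsum : ∫ x, q x ∂μ = 1)
    (hint : Integrable (fun x => q x * relaxed f β (p x / q x)) μ) :
    0 ≤ ∫ x, q x * relaxed f β (p x / q x) ∂μ := by
  have hglb : Integrable (fun x => deriv f β * (p x - q x)) μ :=
    ((hpint.sub hqint).const_mul _)
  have hmono : ∀ x, deriv f β * (p x - q x) ≤ q x * relaxed f β (p x / q x) := by
    intro x
    have h1 : deriv f β * (p x / q x - 1) ≤ relaxed f β (p x / q x) :=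
      relaxed_ge f β hβ hdiff hconv _
    have hq := hq0 x
    have := mul_le_mul_of_nonneg_left h1 hq.le
    calc deriv f β * (p x - q x)
        = q x * (deriv f β * (p x / q x - 1)) := by
          field_simp
      _ ≤ q x * relaxed f β (p x / q x) := this
  have := integral_mono hglb hint hmono
  rw [integral_const_mul, integral_sub hpint hqint, hpsum, hqsum] at this
  simpa using this
end

section
/- Let β > 1, let f : ℝ → ℝ be differentiable and strictly convex on (0, ∞), let μ be a measure on a measurable space X, and let p, q : X → ℝ be measurable with p ≥ 0, q > 0 pointwise, p and q integrable with ∫ p dμ = ∫ q dμ = 1, and suppose x ↦ q(x)·f̃_β(p(x)/q(x)) is μ-integrable. If D_{f̃_β}(p‖q) = 0, then p(x) ≤ β·q(x) for μ-almost every x ∈ X. -/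
open MeasureTheory

lemma tangent_le {f : ℝ → ℝ} {β u : ℝ} (hβ : 0 < β)
    (hdiff : DifferentiableOn ℝ f (Set.Ioi 0))
    (hconv : StrictConvexOn ℝ (Set.Ioi 0) f)
    (hu : β ≤ u) : deriv f β * (u - β) ≤ f u - f β := by
  rcases eq_or_lt_of_le hu with rfl | hlt
  · simp
  have hβm : β ∈ Set.Ioi (0:ℝ) := hβ
  have hum : u ∈ Set.Ioi (0:ℝ) := lt_trans hβ hlt
  have hd : DifferentiableAt ℝ f β :=
    (hdiff.differentiableAt (Ioi_mem_nhds hβ))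
  have h := hconv.convexOn.deriv_le_slope hβm hum hlt hd
  rw [slope_def_field] at h
  have h2 : deriv f β * (u - β) ≤ ((f u - f β) / (u - β)) * (u - β) := by
    apply mul_le_mul_of_nonneg_right h (by linarith)
  rwa [div_mul_cancel₀ _ (by linarith : u - β ≠ 0)] at h2

lemma tangent_lt {f : ℝ → ℝ} {β u : ℝ} (hβ : 0 < β)
    (hdiff : DifferentiableOn ℝ f (Set.Ioi 0))
    (hconv : StrictConvexOn ℝ (Set.Ioi 0) f)
    (hu : β < u) : deriv f β * (u - β) < f u - f β := by
  set m := (β + u) / 2 with hm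
  have hβm : β ∈ Set.Ioi (0:ℝ) := hβ
  have hmm : m ∈ Set.Ioi (0:ℝ) := by simp only [Set.mem_Ioi]; nlinarith
  have hum : u ∈ Set.Ioi (0:ℝ) := lt_trans hβ hu
  have hβltm : β < m := by simp only [hm]; linarith
  have hmltu : m < u := by simp only [hm]; linarith
  have hd : DifferentiableAt ℝ f β :=
    (hdiff.differentiableAt (Ioi_mem_nhds hβ))
  have h1 := hconv.convexOn.deriv_le_slope hβm hmm hβltm hd
  rw [slope_def_field] at h1
  have h2 := hconv.slope_strict_mono_adjacent hβm hum hβltm hmltu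
  have hd1 : (0:ℝ) < m - β := by linarith
  have hd2 : (0:ℝ) < u - m := by linarith
  rw [le_div_iff₀ hd1] at h1
  rw [div_lt_div_iff₀ hd1 hd2] at h2
  nlinarith [mul_pos hd1 hd2]

theorem stmt3 {X : Type*} [MeasurableSpace X] (μ : Measure X)
    (β : ℝ) (hβ : 1 < β) (f : ℝ → ℝ)
    (hdiff : DifferentiableOn ℝ f (Set.Ioi 0))
    (hconv : StrictConvexOn ℝ (Set.Ioi 0) f)
    (p q : X → ℝ) (hpm : Measurable p) (hqm : Measurable q)
    (hp0 : ∀ x, 0 ≤ p x) (hq0 : ∀ x, 0 < q x)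
    (hpint : Integrable p μ) (hqint : Integrable q μ)
    (hpsum : ∫ x, p x ∂μ = 1) (hqsum : ∫ x, q x ∂μ = 1)
    (hint : Integrable (fun x => q x * relaxed f β (p x / q x)) μ)
    (hzero : ∫ x, q x * relaxed f β (p x / q x) ∂μ = 0) :
    ∀ᵐ x ∂μ, p x ≤ β * q x := by
  have hβ0 : (0:ℝ) < β := lt_trans one_pos hβ
  set g : X → ℝ := fun x => q x * relaxed f β (p x / q x) - deriv f β * (p x - q x)
    with hg
  have hkey : ∀ x, q x * relaxed f β (p x / q x) - deriv f β * (p x - q x)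
      = q x * (relaxed f β (p x / q x) - deriv f β * (p x / q x - 1)) := by
    intro x
    have hq := (hq0 x).ne'
    field_simp
  have hgnn : ∀ x, 0 ≤ g x := by
    intro x
    rw [hg]
    simp only
    rw [hkey x]
    apply mul_nonneg (hq0 x).le
    unfold relaxed
    split_ifs with h
    · have := tangent_le hβ0 hdiff hconv h
      nlinarith
    · nlinarith
  have h2int : Integrable (fun x => deriv f β * (p x - q x)) μ :=
    (hpint.sub hqint).const_mul _
  have hgint : Integrable g μ := hint.sub h2int
  have hgzero : ∫ x, g x ∂μ = 0 := by
    rw [hg]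
    rw [integral_sub hint h2int]
    rw [hzero, MeasureTheory.integral_const_mul, integral_sub hpint hqint, hpsum, hqsum]
    ring
  have hae : g =ᵐ[μ] 0 := by
    have h := (integral_eq_zero_iff_of_nonneg hgnn hgint).mp hgzero
    exact h
  filter_upwards [hae] with x hx
  by_contra hcon
  push_neg at hcon
  have hqx := hq0 x
  have hu : β < p x / q x := (lt_div_iff₀ hqx).mpr (by linarith [mul_comm β (q x)])
  have hgx : 0 < g x := by
    rw [hg]
    simp only
    rw [hkey x]
    apply mul_pos hqx
    unfold relaxed
    rw [if_pos hu.le]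
    have := tangent_lt hβ0 hdiff hconv hu
    nlinarith
  simp only [Pi.zero_apply] at hx
  linarith
end

section
/- Let e ∈ ℝ, α > 0, β > 1 with e > (α + 1)·(log β + 1). Then ω* = exp(e/(1 + α) − 1) satisfies ω* > β, ω* is the unique maximizer of h over [0, ∞), and h(ω*) = (1 + α)·exp(e/(1 + α) − 1) − α·C_{f,β}, where C_{f,β} = −β·log β + (log β + 1)·(β − 1). -/
/-- `C_{f,β} = −f(β) + f'(β)·(β − 1)` for `f(u) = u·log u`. -/
noncomputable def Cfb (β : ℝ) : ℝ := -β * Real.log β + (Real.log β + 1) * (β - 1)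

/-- The relaxed function `f̃_β` for `f(u) = u·log u`. -/
noncomputable def ftilde (β ω : ℝ) : ℝ :=
  if β ≤ ω then ω * Real.log ω + Cfb β
  else (Real.log β + 1) * (ω - 1)

/-- `h(ω) = ω·e − ω·log ω − α·f̃_β(ω)` (note `Real.log 0 = 0`, matching `0·log 0 = 0`). -/
noncomputable def h (e α β ω : ℝ) : ℝ := ω * e - ω * Real.log ω - α * ftilde β ω

lemma aux1 (x y : ℝ) (hx : 0 < x) (hy : 0 < y) (hxy : x ≠ y) :
    x - y < x * (Real.log x - Real.log y) := by
  have h1 : Real.log (y / x) < y / x - 1 :=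
    Real.log_lt_sub_one_of_pos (div_pos hy hx) (by
      intro h
      exact hxy ((div_eq_one_iff_eq hx.ne').mp h).symm)
  rw [Real.log_div hy.ne' hx.ne'] at h1
  have h2 : x * (Real.log y - Real.log x) < x * (y / x - 1) :=
    (mul_lt_mul_iff_right₀ hx).mpr h1
  have h3 : x * (y / x - 1) = y - x := by field_simp
  nlinarith

lemma aux2 (x y : ℝ) (hx : 0 ≤ x) (hy : 0 < y) :
    x - y ≤ x * (Real.log x - Real.log y) := by
  rcases eq_or_lt_of_le hx with h | h
  · rw [← h]; simp; linarith
  · rcases eq_or_ne x y with rfl | hne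
    · simp
    · exact (aux1 x y h hy hne).le

theorem stmt6 (e α β : ℝ) (hα : 0 < α) (hβ : 1 < β)
    (he : (α + 1) * (Real.log β + 1) < e) :
    β < Real.exp (e / (1 + α) - 1) ∧
    (∀ ω : ℝ, 0 ≤ ω → ω ≠ Real.exp (e / (1 + α) - 1) →
      h e α β ω < h e α β (Real.exp (e / (1 + α) - 1))) ∧
    h e α β (Real.exp (e / (1 + α) - 1)) =
      (1 + α) * Real.exp (e / (1 + α) - 1) - α * Cfb β := by
  have hα1 : (0:ℝ) < 1 + α := by linarith
  have hβ0 : (0:ℝ) < β := by linarith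
  set L : ℝ := e / (1 + α) - 1 with hL
  set W : ℝ := Real.exp L with hWdef
  have hWpos : 0 < W := Real.exp_pos _
  have hlogW : Real.log W = L := Real.log_exp _
  have heL : e = (1 + α) * (L + 1) := by
    rw [hL]; field_simp; ring
  have hlogβ : Real.log β < L := by
    rw [hL, lt_sub_iff_add_lt, lt_div_iff₀ hα1]
    nlinarith
  have hβW : β < W := by
    rw [← Real.exp_log hβ0, hWdef]
    exact Real.exp_lt_exp.mpr hlogβ
  have hval : h e α β W = (1 + α) * W - α * Cfb β := by
    simp only [h, ftilde, if_pos hβW.le, hlogW]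
    rw [heL]; ring
  have hmain : ∀ ω : ℝ, 0 < ω → ω ≠ W → ω * (L + 1 - Real.log ω) < W := by
    intro ω hω hne
    have key := aux1 ω W hω hWpos hne
    rw [hlogW] at key
    nlinarith
  refine ⟨hβW, ?_, hval⟩
  intro ω hω hne
  rw [hval]
  by_cases hcase : β ≤ ω
  · have h2 := hmain ω (lt_of_lt_of_le hβ0 hcase) hne
    simp only [h, ftilde, if_pos hcase]
    rw [heL]
    nlinarith [mul_lt_mul_of_pos_left h2 hα1]
  · push_neg at hcase
    have h2 := hmain β hβ0 hβW.ne
    have key3 := aux2 ω β hω hβ0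
    have hβlt : β * e - (1 + α) * (β * Real.log β) < (1 + α) * W := by
      rw [heL]
      nlinarith [mul_lt_mul_of_pos_left h2 hα1]
    have P : 0 < (β - ω) * (e - (α + 1) * (Real.log β + 1)) :=
      mul_pos (by linarith) (by linarith)
    simp only [h, ftilde, if_neg (not_le.mpr hcase), Cfb]
    nlinarith [hβlt, key3, P]
end

section
/- Let e ∈ ℝ, α > 0, β > 1 with e ≤ (α + 1)·(log β + 1). Then ω* = exp(e − 1 − α·(log β + 1)) satisfies ω* ≤ β, ω* is the unique maximizer of h over [0, ∞), and h(ω*) = exp(e − 1 − α·(log β + 1)) + α·(log β + 1). -/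
lemma key_le (c ω : ℝ) (hω : 0 ≤ ω) :
    ω * c - ω * Real.log ω ≤ Real.exp (c - 1) := by
  rcases hω.eq_or_lt with h0 | h0
  · simp [← h0, (Real.exp_pos _).le]
  · have h1 : c - 1 - Real.log ω + 1 ≤ Real.exp (c - 1 - Real.log ω) :=
      Real.add_one_le_exp _
    have h2 : Real.exp (c - 1) = ω * Real.exp (c - 1 - Real.log ω) := by
      conv_rhs => rw [← Real.exp_log h0, ← Real.exp_add]
      congr 1; rw [Real.log_exp]; ring
    nlinarith [mul_le_mul_of_nonneg_left h1 h0.le]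

lemma key_lt (c ω : ℝ) (hω : 0 ≤ ω) (hne : ω ≠ Real.exp (c - 1)) :
    ω * c - ω * Real.log ω < Real.exp (c - 1) := by
  rcases hω.eq_or_lt with h0 | h0
  · simp [← h0, Real.exp_pos]
  · have hne' : c - 1 - Real.log ω ≠ 0 := by
      intro h
      apply hne
      have : Real.log ω = c - 1 := by linarith
      rw [← this, Real.exp_log h0]
    have h1 : c - 1 - Real.log ω + 1 < Real.exp (c - 1 - Real.log ω) :=
      Real.add_one_lt_exp hne'
    have h2 : Real.exp (c - 1) = ω * Real.exp (c - 1 - Real.log ω) := by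
      conv_rhs => rw [← Real.exp_log h0, ← Real.exp_add]
      congr 1; rw [Real.log_exp]; ring
    nlinarith [mul_lt_mul_of_pos_left h1 h0]

theorem stmt7 (e α β : ℝ) (hα : 0 < α) (hβ : 1 < β)
    (he : e ≤ (α + 1) * (Real.log β + 1)) :
    Real.exp (e - 1 - α * (Real.log β + 1)) ≤ β ∧
    (∀ ω : ℝ, 0 ≤ ω → ω ≠ Real.exp (e - 1 - α * (Real.log β + 1)) →
      h e α β ω < h e α β (Real.exp (e - 1 - α * (Real.log β + 1)))) ∧
    h e α β (Real.exp (e - 1 - α * (Real.log β + 1))) =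
      Real.exp (e - 1 - α * (Real.log β + 1)) + α * (Real.log β + 1) := by
  set L := Real.log β + 1 with hL
  set W := Real.exp (e - 1 - α * L) with hW
  have hβ0 : (0:ℝ) < β := by linarith
  have hWle : W ≤ β := by
    rw [hW, ← Real.exp_log hβ0]
    apply Real.exp_le_exp.mpr
    nlinarith
  -- log W
  have hlogW : Real.log W = e - 1 - α * L := Real.log_exp _
  -- ftilde at W
  have hftW : ftilde β W = L * (W - 1) := by
    rw [ftilde]
    split_ifs with hc
    · have hWβ : W = β := le_antisymm hWle hc
      rw [hWβ, Cfb, hL]; ring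
    · rfl
  have hval : h e α β W = W + α * L := by
    rw [h, hftW, hlogW]; ring
  refine ⟨hWle, ?_, hval⟩
  intro ω hω hne
  rw [hval]
  -- bound ftilde from below by tangent: ftilde β ω ≥ L*(ω-1)
  have hft : L * (ω - 1) ≤ ftilde β ω := by
    rw [ftilde]
    split_ifs with hc
    · -- need ω*L - ω*log ω ≤ β = exp(L-1)
      have hβexp : Real.exp (L - 1) = β := by
        rw [hL]; simp [Real.exp_log hβ0]
      have := key_le L ω hω
      rw [hβexp] at this
      rw [Cfb, hL]
      nlinarith
    · rw [hL]
  have hkey : ω * (e - α * L) - ω * Real.log ω < W := by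
    have : W = Real.exp (e - α * L - 1) := by rw [hW]; ring_nf
    rw [this]
    apply key_lt _ _ hω
    rw [← this]; exact hne
  have hmul : α * (L * (ω - 1)) ≤ α * ftilde β ω :=
    mul_le_mul_of_nonneg_left hft hα.le
  rw [h]
  nlinarith
end

section
/- Let e ∈ ℝ, α > 0, β > 1, r > 0 with e > (α + 1)·(log β + 1) + log r. Then ω* = exp((e + α·log r)/(1 + α) − 1) satisfies ω* > β·r, ω* is the unique maximizer of h† over [0, ∞), and h†(ω*) = (1 + α)·exp((e + α·log r)/(1 + α) − 1) − α·C_{f,β}·r, where C_{f,β} = −β·log β + (log β + 1)·(β − 1). -/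
/-- `h†(ω) = ω·e − ω·log ω − α·r·f̃_β(ω/r)`. -/
noncomputable def hdag (e α β r ω : ℝ) : ℝ :=
  ω * e - ω * Real.log ω - α * r * ftilde β (ω / r)

private lemma key_ineq (A α : ℝ) (hα : 0 < α) (ω : ℝ) (hω : 0 < ω)
    (hne : ω ≠ Real.exp (A / (1 + α) - 1)) :
    ω * (A - (1 + α) * Real.log ω) < (1 + α) * Real.exp (A / (1 + α) - 1) := by
  set W := Real.exp (A / (1 + α) - 1) with hW
  have hWpos : 0 < W := Real.exp_pos _
  set t := ω / W with ht
  have htpos : 0 < t := div_pos hω hWpos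
  have htne : t ≠ 1 := by
    intro h
    rw [ht, div_eq_one_iff_eq hWpos.ne'] at h
    exact hne h
  have hωt : ω = t * W := by rw [ht, div_mul_cancel₀ _ hWpos.ne']
  have hlogt : Real.log t = Real.log ω - (A / (1 + α) - 1) := by
    rw [ht, Real.log_div hω.ne' hWpos.ne', hW, Real.log_exp]
  -- t (1 - log t) < 1
  have h1 : Real.log t⁻¹ < t⁻¹ - 1 :=
    Real.log_lt_sub_one_of_pos (inv_pos.mpr htpos) (by simpa using htne)
  rw [Real.log_inv] at h1
  have hinv : t * t⁻¹ = 1 := mul_inv_cancel₀ htpos.ne'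
  have hkey : t * (1 - Real.log t) < 1 := by nlinarith
  have h1α : (0:ℝ) < 1 + α := by linarith
  have hA : A - (1 + α) * Real.log ω = (1 + α) * (1 - Real.log t) := by
    rw [hlogt]; field_simp; ring
  rw [hA, hωt]
  calc t * W * ((1 + α) * (1 - Real.log t))
      = ((1 + α) * W) * (t * (1 - Real.log t)) := by ring
    _ < ((1 + α) * W) * 1 := by
        exact mul_lt_mul_of_pos_left hkey (by positivity)
    _ = (1 + α) * W := by ring

/-- tangent line bound for `u ↦ u log u` at `c`. -/
private lemma tangent (c : ℝ) (hc : 0 < c) (ω : ℝ) (hω : 0 ≤ ω) :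
    c * Real.log c + (Real.log c + 1) * (ω - c) ≤ ω * Real.log ω := by
  rcases eq_or_lt_of_le hω with h | h
  · simp [← h]; nlinarith
  · have h1 : Real.log (c / ω) ≤ c / ω - 1 := Real.log_le_sub_one_of_pos (div_pos hc h)
    rw [Real.log_div hc.ne' h.ne'] at h1
    have hinv : ω * (c / ω) = c := by field_simp
    nlinarith

theorem stmt8 (e α β r : ℝ) (hα : 0 < α) (hβ : 1 < β) (hr : 0 < r)
    (he : (α + 1) * (Real.log β + 1) + Real.log r < e) :
    β * r < Real.exp ((e + α * Real.log r) / (1 + α) - 1) ∧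
    (∀ ω : ℝ, 0 ≤ ω → ω ≠ Real.exp ((e + α * Real.log r) / (1 + α) - 1) →
      hdag e α β r ω < hdag e α β r (Real.exp ((e + α * Real.log r) / (1 + α) - 1))) ∧
    hdag e α β r (Real.exp ((e + α * Real.log r) / (1 + α) - 1)) =
      (1 + α) * Real.exp ((e + α * Real.log r) / (1 + α) - 1) - α * Cfb β * r := by
  set A := e + α * Real.log r with hA
  set W := Real.exp (A / (1 + α) - 1) with hW
  have h1α : (0:ℝ) < 1 + α := by linarith
  have hWpos : 0 < W := Real.exp_pos _
  have hβr : 0 < β * r := by positivity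
  have hlogβr : Real.log (β * r) = Real.log β + Real.log r :=
    Real.log_mul (by linarith) hr.ne'
  -- part 1 : β r < W
  have part1 : β * r < W := by
    rw [hW, ← Real.exp_log hβr]
    apply Real.exp_lt_exp.mpr
    rw [hlogβr, lt_sub_iff_add_lt, lt_div_iff₀ h1α, hA]
    nlinarith
  -- upper branch formula
  have hupper : ∀ ω : ℝ, 0 < ω → β * r ≤ ω →
      hdag e α β r ω = ω * A - (1 + α) * (ω * Real.log ω) - α * r * Cfb β := by
    intro ω hω hbr
    unfold hdag ftilde
    rw [if_pos ((le_div_iff₀ hr).mpr hbr), Real.log_div hω.ne' hr.ne', hA]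
    field_simp
    ring
  -- lower branch formula (strict)
  have hlower : ∀ ω : ℝ, ω < β * r →
      hdag e α β r ω = ω * (e - α * (Real.log β + 1)) - ω * Real.log ω
        + α * r * (Real.log β + 1) := by
    intro ω hbr
    unfold hdag ftilde
    rw [if_neg (by rw [not_le, div_lt_iff₀ hr]; linarith)]
    field_simp
    ring
  -- value at W and part 3
  have hlogW : Real.log W = A / (1 + α) - 1 := by rw [hW, Real.log_exp]
  have hWval : hdag e α β r W = (1 + α) * W - α * Cfb β * r := by
    rw [hupper W hWpos (le_of_lt part1), hlogW]
    field_simp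
    ring
  refine ⟨part1, ?_, hWval⟩
  intro ω hω hne
  rcases le_or_gt (β * r) ω with hcase | hcase
  · -- upper region
    have hωpos : 0 < ω := lt_of_lt_of_le hβr hcase
    rw [hupper ω hωpos hcase, hWval]
    have hk := key_ineq A α hα ω hωpos (by rwa [← hW])
    nlinarith
  · -- lower region : hdag ω < hdag (β r) < hdag W
    have hcne : β * r ≠ W := ne_of_lt part1
    have hkc := key_ineq A α hα (β * r) hβr (by rwa [← hW])
    have hstep2 : hdag e α β r (β * r) < hdag e α β r W := by
      rw [hupper (β * r) hβr le_rfl, hWval]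
      nlinarith
    have hcval : hdag e α β r (β * r) = (β * r) * (e - α * (Real.log β + 1))
        - (β * r) * Real.log (β * r) + α * r * (Real.log β + 1) := by
      rw [hupper (β * r) hβr le_rfl, hlogβr, hA]
      unfold Cfb
      ring
    have hstep1 : hdag e α β r ω < hdag e α β r (β * r) := by
      rw [hlower ω hcase, hcval]
      have htan := tangent (β * r) hβr ω hω
      have hB : Real.log (β * r) + 1 < e - α * (Real.log β + 1) := by
        rw [hlogβr]; nlinarith
      nlinarith [mul_pos (sub_pos.mpr hB) (sub_pos.mpr hcase)]
    linarith
end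

section
/- Let e ∈ ℝ, α > 0, β > 1, r > 0 with e ≤ (α + 1)·(log β + 1) + log r. Then ω* = exp(e − 1 − α·(log β + 1)) satisfies ω* ≤ β·r, ω* is the unique maximizer of h† over [0, ∞), and h†(ω*) = exp(e − 1 − α·(log β + 1)) + α·(log β + 1)·r. -/
lemma ftilde_ge (β x : ℝ) (hβ : 1 < β) :
    (Real.log β + 1) * (x - 1) ≤ ftilde β x := by
  unfold ftilde Cfb
  split_ifs with h
  · have hb : (0:ℝ) < β := by linarith
    have hx : (0:ℝ) < x := by linarith
    have h1 : Real.log (β / x) ≤ β / x - 1 :=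
      Real.log_le_sub_one_of_pos (by positivity)
    rw [Real.log_div (ne_of_gt hb) (ne_of_gt hx)] at h1
    have h2 : x * (Real.log β - Real.log x) ≤ x * (β / x - 1) :=
      mul_le_mul_of_nonneg_left h1 hx.le
    have h3 : x * (β / x - 1) = β - x := by field_simp
    nlinarith [h2]
  · exact le_refl _

lemma ftilde_le (β x : ℝ) (hx : x ≤ β) :
    ftilde β x = (Real.log β + 1) * (x - 1) := by
  unfold ftilde Cfb
  split_ifs with h
  · have : x = β := le_antisymm hx h
    subst this
    ring
  · rfl

lemma gmax (a ω : ℝ) (hω : 0 ≤ ω) (hne : ω ≠ Real.exp (a - 1)) :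
    ω * a - ω * Real.log ω < Real.exp (a - 1) := by
  rcases eq_or_lt_of_le hω with h0 | h0
  · simp [← h0, Real.exp_pos]
  · have h1 : Real.log (Real.exp (a - 1) / ω) < Real.exp (a - 1) / ω - 1 := by
      apply Real.log_lt_sub_one_of_pos (by positivity)
      intro h
      apply hne
      field_simp at h
      linarith
    rw [Real.log_div (Real.exp_ne_zero _) (ne_of_gt h0), Real.log_exp] at h1
    have h2 : ω * (a - 1 - Real.log ω) < ω * (Real.exp (a - 1) / ω - 1) :=
      mul_lt_mul_of_pos_left h1 h0
    have h3 : ω * (Real.exp (a - 1) / ω - 1) = Real.exp (a - 1) - ω := by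
      field_simp
    nlinarith [h2]

theorem stmt9 (e α β r : ℝ) (hα : 0 < α) (hβ : 1 < β) (hr : 0 < r)
    (he : e ≤ (α + 1) * (Real.log β + 1) + Real.log r) :
    Real.exp (e - 1 - α * (Real.log β + 1)) ≤ β * r ∧
    (∀ ω : ℝ, 0 ≤ ω → ω ≠ Real.exp (e - 1 - α * (Real.log β + 1)) →
      hdag e α β r ω < hdag e α β r (Real.exp (e - 1 - α * (Real.log β + 1)))) ∧
    hdag e α β r (Real.exp (e - 1 - α * (Real.log β + 1))) =
      Real.exp (e - 1 - α * (Real.log β + 1)) + α * (Real.log β + 1) * r := by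
  have hβ0 : (0:ℝ) < β := by linarith
  set M := Real.exp (e - 1 - α * (Real.log β + 1)) with hM
  clear_value M
  have hMpos : 0 < M := hM ▸ Real.exp_pos _
  have hbound : M ≤ β * r := by
    rw [hM, ← Real.exp_log (by positivity : (0:ℝ) < β * r)]
    apply Real.exp_le_exp.mpr
    rw [Real.log_mul (ne_of_gt hβ0) (ne_of_gt hr)]
    nlinarith [he]
  have hlogM : Real.log M = e - 1 - α * (Real.log β + 1) := by
    rw [hM, Real.log_exp]
  have hMr : M / r ≤ β := (div_le_iff₀ hr).mpr hbound
  have heq : hdag e α β r M = M + α * (Real.log β + 1) * r := by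
    unfold hdag
    rw [ftilde_le β (M / r) hMr, hlogM]
    field_simp
    ring
  refine ⟨hbound, ?_, heq⟩
  intro ω hω hne
  rw [heq]
  have h1 := ftilde_ge β (ω / r) hβ
  have h2 : α * r * ((Real.log β + 1) * (ω / r - 1))
      = α * (Real.log β + 1) * ω - α * (Real.log β + 1) * r := by
    field_simp
  have h3 : ω * (e - α * (Real.log β + 1)) - ω * Real.log ω
      < Real.exp ((e - α * (Real.log β + 1)) - 1) := by
    apply gmax _ _ hω
    rw [show e - α * (Real.log β + 1) - 1 = e - 1 - α * (Real.log β + 1) by ring, ← hM]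
    exact hne
  have h4 : Real.exp ((e - α * (Real.log β + 1)) - 1) = M := by
    rw [hM]; ring_nf
  have h5 : α * r * ((Real.log β + 1) * (ω / r - 1)) ≤ α * r * ftilde β (ω / r) :=
    mul_le_mul_of_nonneg_left h1 (by positivity)
  unfold hdag
  nlinarith [h5, h2, h3, h4]
end

section
/- Let e ∈ ℝ, α > 0, β > 1. Then the function h is strictly concave on (0, ∞). -/
private noncomputable def g1 (e α β ω : ℝ) : ℝ :=
  ω * e - ω * Real.log ω - α * ((Real.log β + 1) * (ω - 1))

private noncomputable def g2 (e α β ω : ℝ) : ℝ :=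
  ω * e - ω * Real.log ω - α * (ω * Real.log ω + Cfb β)

private noncomputable def D (e α β ω : ℝ) : ℝ :=
  e - 1 - Real.log ω - α * (Real.log (max ω β) + 1)

lemma g1_hasDerivAt (e α β : ℝ) {ω : ℝ} (hω : ω ≠ 0) :
    HasDerivAt (g1 e α β) (e - 1 - Real.log ω - α * (Real.log β + 1)) ω := by
  have h1 := Real.hasDerivAt_mul_log hω
  have : HasDerivAt (g1 e α β)
      (e - (Real.log ω + 1) - α * ((Real.log β + 1) * 1)) ω := by
    unfold g1
    have := (((hasDerivAt_id ω).mul_const e).sub h1).sub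
      ((((hasDerivAt_id ω).sub_const 1).const_mul (Real.log β + 1)).const_mul α)
    simpa [Pi.sub_def] using this
  convert this using 1; ring

lemma g2_hasDerivAt (e α β : ℝ) {ω : ℝ} (hω : ω ≠ 0) :
    HasDerivAt (g2 e α β) (e - 1 - Real.log ω - α * (Real.log ω + 1)) ω := by
  have h1 := Real.hasDerivAt_mul_log hω
  have : HasDerivAt (g2 e α β)
      (e - (Real.log ω + 1) - α * (Real.log ω + 1 + 0)) ω := by
    unfold g2
    have := (((hasDerivAt_id ω).mul_const e).sub h1).sub
      ((h1.add_const (Cfb β)).const_mul α)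
    simpa [Pi.sub_def] using this
  convert this using 1; ring

lemma h_eq_g1 (e α β : ℝ) : Set.EqOn (h e α β) (g1 e α β) (Set.Iic β) := by
  intro ω hω
  simp only [h, g1, ftilde]
  split_ifs with hc
  · have : ω = β := le_antisymm hω hc
    subst this
    simp only [Cfb]; ring
  · rfl

lemma h_eq_g2 (e α β : ℝ) : Set.EqOn (h e α β) (g2 e α β) (Set.Ici β) := by
  intro ω hω
  simp only [h, g2, ftilde, if_pos (Set.mem_Ici.mp hω)]

lemma h_hasDerivAt (e α β : ℝ) (hβ : 1 < β) {ω : ℝ} (hω : 0 < ω) :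
    HasDerivAt (h e α β) (D e α β ω) ω := by
  have hβ0 : (0 : ℝ) < β := lt_trans one_pos hβ
  rcases lt_trichotomy ω β with hlt | heq | hgt
  · have : HasDerivAt (g1 e α β) (D e α β ω) ω := by
      have := g1_hasDerivAt e α β hω.ne'
      simpa [D, max_eq_right hlt.le] using this
    refine this.congr_of_eventuallyEq ?_
    filter_upwards [Iio_mem_nhds hlt] with x hx
    exact h_eq_g1 e α β (Set.mem_Iic.mpr hx.le)
  · subst heq
    have hD1 : HasDerivWithinAt (h e α ω) (D e α ω ω) (Set.Iic ω) ω := by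
      have := (g1_hasDerivAt e α ω hω.ne').hasDerivWithinAt (s := Set.Iic ω)
      have h2 : HasDerivWithinAt (h e α ω)
          (e - 1 - Real.log ω - α * (Real.log ω + 1)) (Set.Iic ω) ω :=
        this.congr (h_eq_g1 e α ω) (h_eq_g1 e α ω Set.self_mem_Iic)
      simpa [D, max_self] using h2
    have hD2 : HasDerivWithinAt (h e α ω) (D e α ω ω) (Set.Ici ω) ω := by
      have := (g2_hasDerivAt e α ω hω.ne').hasDerivWithinAt (s := Set.Ici ω)
      have h2 : HasDerivWithinAt (h e α ω)
          (e - 1 - Real.log ω - α * (Real.log ω + 1)) (Set.Ici ω) ω :=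
        this.congr (h_eq_g2 e α ω) (h_eq_g2 e α ω Set.self_mem_Ici)
      simpa [D, max_self] using h2
    have := hD1.union hD2
    rw [Set.Iic_union_Ici] at this
    exact hasDerivWithinAt_univ.mp this
  · have : HasDerivAt (g2 e α β) (D e α β ω) ω := by
      have := g2_hasDerivAt e α β hω.ne'
      simpa [D, max_eq_left hgt.le] using this
    refine this.congr_of_eventuallyEq ?_
    filter_upwards [Ioi_mem_nhds hgt] with x hx
    exact h_eq_g2 e α β (Set.mem_Ici.mpr hx.le)

theorem stmt10 (e α β : ℝ) (hα : 0 < α) (hβ : 1 < β) :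
    StrictConcaveOn ℝ (Set.Ioi (0 : ℝ)) (h e α β) := by
  have hβ0 : (0 : ℝ) < β := lt_trans one_pos hβ
  have hderiv : ∀ ω ∈ Set.Ioi (0 : ℝ), deriv (h e α β) ω = D e α β ω :=
    fun ω hω => (h_hasDerivAt e α β hβ hω).deriv
  refine StrictAntiOn.strictConcaveOn_of_deriv (convex_Ioi 0) ?_ ?_
  · intro ω hω
    exact (h_hasDerivAt e α β hβ hω).continuousAt.continuousWithinAt
  · rw [interior_Ioi]
    intro x hx y hy hxy
    rw [hderiv x hx, hderiv y hy]
    unfold D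
    have hlog : Real.log x < Real.log y := Real.log_lt_log hx hxy
    have hmax : Real.log (max x β) ≤ Real.log (max y β) :=
      Real.log_le_log (lt_max_of_lt_right hβ0) (max_le_max hxy.le le_rfl)
    nlinarith
end

section
/- Let e ∈ ℝ, α > 0, β > 1, r > 0. Then the function h† is strictly concave on (0, ∞). -/
lemma ftilde_eq_at (β : ℝ) : β * Real.log β + Cfb β = (Real.log β + 1) * (β - 1) := by
  unfold Cfb; ring

lemma ftilde_hasDerivAt {β : ℝ} (hβ : 1 < β) {x : ℝ} (hx : 0 < x) :
    HasDerivAt (ftilde β) (Real.log (max x β) + 1) x := by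
  rcases lt_trichotomy x β with h | h | h
  · -- x < β : locally linear
    have hmax : max x β = β := max_eq_right h.le
    rw [hmax]
    have hd : HasDerivAt (fun ω : ℝ => (Real.log β + 1) * (ω - 1)) (Real.log β + 1) x := by
      simpa using ((hasDerivAt_id x).sub_const 1).const_mul (Real.log β + 1)
    refine hd.congr_of_eventuallyEq ?_
    filter_upwards [Iio_mem_nhds h] with y hy
    simp [ftilde, not_le.mpr (show y < β from hy)]
  · -- x = β : glue one-sided derivatives
    subst h
    have hmax : max x x = x := max_self x
    rw [hmax]
    have hle : HasDerivWithinAt (ftilde x) (Real.log x + 1) (Set.Iic x) x := by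
      have hd : HasDerivAt (fun ω : ℝ => (Real.log x + 1) * (ω - 1)) (Real.log x + 1) x := by
        simpa using ((hasDerivAt_id x).sub_const 1).const_mul (Real.log x + 1)
      refine (hd.hasDerivWithinAt).congr ?_ ?_
      · intro y hy
        rcases eq_or_lt_of_le (Set.mem_Iic.mp hy) with rfl | hlt
        · simp [ftilde, ftilde_eq_at]
        · simp [ftilde, not_le.mpr hlt]
      · simp [ftilde, ftilde_eq_at]
    have hge : HasDerivWithinAt (ftilde x) (Real.log x + 1) (Set.Ici x) x := by
      have hd : HasDerivAt (fun ω : ℝ => ω * Real.log ω + Cfb x) (Real.log x + 1) x :=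
        (Real.hasDerivAt_mul_log hx.ne').add_const _
      refine (hd.hasDerivWithinAt).congr ?_ ?_
      · intro y hy
        simp [ftilde, Set.mem_Ici.mp hy]
      · simp [ftilde]
    have := hle.union hge
    rw [Set.Iic_union_Ici] at this
    exact this.hasDerivAt Filter.univ_mem
  · -- β < x
    have hmax : max x β = x := max_eq_left h.le
    rw [hmax]
    have hd : HasDerivAt (fun ω : ℝ => ω * Real.log ω + Cfb β) (Real.log x + 1) x :=
      (Real.hasDerivAt_mul_log hx.ne').add_const _
    refine hd.congr_of_eventuallyEq ?_
    filter_upwards [Ioi_mem_nhds h] with y hy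
    simp [ftilde, le_of_lt (show β < y from hy)]

lemma ftilde_convexOn {β : ℝ} (hβ : 1 < β) : ConvexOn ℝ (Set.Ioi (0 : ℝ)) (ftilde β) := by
  have hderiv : ∀ x ∈ Set.Ioi (0 : ℝ), HasDerivAt (ftilde β) (Real.log (max x β) + 1) x :=
    fun x hx => ftilde_hasDerivAt hβ hx
  have hβ0 : (0 : ℝ) < β := lt_trans one_pos hβ
  refine MonotoneOn.convexOn_of_deriv (convex_Ioi 0) ?_ ?_ ?_
  · exact fun x hx => ((hderiv x hx).continuousAt).continuousWithinAt
  · rw [interior_Ioi]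
    exact fun x hx => ((hderiv x hx).differentiableAt).differentiableWithinAt
  · rw [interior_Ioi]
    intro x hx y hy hxy
    rw [(hderiv x hx).deriv, (hderiv y hy).deriv]
    have h1 : (0:ℝ) < max x β := lt_of_lt_of_le hβ0 (le_max_right _ _)
    have h2 : max x β ≤ max y β := max_le_max hxy le_rfl
    have h3 : Real.log (max x β) ≤ Real.log (max y β) := Real.log_le_log h1 h2
    linarith

theorem stmt12 (e α β r : ℝ) (hα : 0 < α) (hβ : 1 < β) (hr : 0 < r) :
    StrictConcaveOn ℝ (Set.Ioi (0 : ℝ)) (hdag e α β r) := by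
  -- the composed/scaled relaxed term is convex
  have hcomp : ConvexOn ℝ (Set.Ioi (0 : ℝ)) (fun ω => ftilde β (ω / r)) := by
    have hc := ftilde_convexOn hβ
    refine ⟨convex_Ioi 0, ?_⟩
    intro x hx y hy a b ha hb hab
    have hx' : x / r ∈ Set.Ioi (0 : ℝ) := div_pos hx hr
    have hy' : y / r ∈ Set.Ioi (0 : ℝ) := div_pos hy hr
    have := hc.2 hx' hy' ha hb hab
    simp only [smul_eq_mul] at this ⊢
    have hEq : (a * x + b * y) / r = a * (x / r) + b * (y / r) := by ring
    rw [hEq]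
    exact this
  have hscaled : ConvexOn ℝ (Set.Ioi (0 : ℝ)) (fun ω => α * r * ftilde β (ω / r)) := by
    have := hcomp.smul (c := α * r) (by positivity)
    simpa [smul_eq_mul] using this
  -- the entropy-like part is strictly concave
  have hstrict : StrictConcaveOn ℝ (Set.Ioi (0 : ℝ)) (fun ω : ℝ => ω * e - ω * Real.log ω) := by
    have h1 := (Real.strictConvexOn_mul_log.subset
        (Set.Ioi_subset_Ici le_rfl) (convex_Ioi 0)).neg
    have h2 : ConcaveOn ℝ (Set.Ioi (0 : ℝ)) (fun ω : ℝ => ω * e) := by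
      exact (LinearMap.mk (AddHom.mk (fun ω : ℝ => ω * e) (by intro x y; ring))
        (by intro c x; simp [smul_eq_mul]; ring)).concaveOn (convex_Ioi 0)
    have := h1.add_concaveOn h2
    refine this.congr ?_
    intro x _; simp [Pi.add_apply]; ring
  have := hstrict.add_concaveOn hscaled.neg
  refine this.congr ?_
  intro x _
  simp [hdag, Pi.add_apply, Pi.neg_apply]
  ring
end

section
/- Let S, A be finite nonempty sets, γ ∈ [0, 1), p₀, T as in the MDP setup, and let d : S × A → ℝ satisfy the Bellman flow constraints with ∑_a d(s, a) > 0 for every s ∈ S. Define the policy π_d(a | s) = d(s, a)/∑_{a'} d(s, a'). Then d is the occupancy measure of π_d, i.e. d^{π_d}(s, a) = d(s, a) for all (s, a). -/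
/-- The state-distribution sequence: `ρ_0 = p₀` and
`ρ_{t+1}(s') = ∑_{s,a} ρ_t(s)·π(a|s)·T(s'|s,a)`. -/
noncomputable def stateDist {S A : Type*} [Fintype S] [Fintype A]
    (p₀ : S → ℝ) (T : S → A → S → ℝ) (π : S → A → ℝ) : ℕ → S → ℝ
  | 0 => p₀
  | t + 1 => fun s' => ∑ s, ∑ a, stateDist p₀ T π t s * π s a * T s a s'

/-- The occupancy measure `d^π(s,a) = (1−γ)·∑_{t=0}^∞ γ^t·ρ_t(s)·π(a|s)`. -/
noncomputable def occMeasure {S A : Type*} [Fintype S] [Fintype A]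
    (γ : ℝ) (p₀ : S → ℝ) (T : S → A → S → ℝ) (π : S → A → ℝ) (s : S) (a : A) : ℝ :=
  (1 - γ) * ∑' t : ℕ, γ ^ t * stateDist p₀ T π t s * π s a

theorem stmt17 {S A : Type*} [Fintype S] [Fintype A] [Nonempty S] [Nonempty A]
    (γ : ℝ) (hγ0 : 0 ≤ γ) (hγ1 : γ < 1)
    (p₀ : S → ℝ) (hp₀ : ∀ s, 0 ≤ p₀ s) (hp₀sum : ∑ s, p₀ s = 1)
    (T : S → A → S → ℝ) (hT : ∀ s a s', 0 ≤ T s a s')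
    (hTsum : ∀ s a, ∑ s', T s a s' = 1)
    (d : S → A → ℝ) (hd0 : ∀ s a, 0 ≤ d s a)
    (hflow : ∀ s, ∑ a, d s a =
      (1 - γ) * p₀ s + γ * ∑ s', ∑ a', T s' a' s * d s' a')
    (hdpos : ∀ s, 0 < ∑ a, d s a) :
    ∀ s a, occMeasure γ p₀ T (fun s a => d s a / ∑ a', d s a') s a = d s a := by
  set π : S → A → ℝ := fun s a => d s a / ∑ a', d s a' with hπdef
  set D : S → ℝ := fun s => ∑ a, d s a with hDdef
  have hDpos : ∀ s, 0 < D s := hdpos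
  have hπ0 : ∀ s a, 0 ≤ π s a := fun s a => div_nonneg (hd0 s a) (hDpos s).le
  have hπsum : ∀ s, ∑ a, π s a = 1 := by
    intro s
    simp only [hπdef, ← Finset.sum_div]
    exact div_self (hDpos s).ne'
  have hdeq : ∀ s a, d s a = D s * π s a := by
    intro s a
    rw [hπdef, hDdef]
    field_simp
    rw [mul_div_assoc, div_self (hdpos s).ne', mul_one]
  -- flow equation via stateDist
  have hflow' : ∀ s, D s = (1 - γ) * p₀ s + γ * stateDist D T π 1 s := by
    intro s
    rw [hDdef]
    simp only [hflow s]
    congr 2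
    simp only [stateDist]
    refine Finset.sum_congr rfl fun s' _ => Finset.sum_congr rfl fun a' _ => ?_
    rw [hdeq s' a']; ring
  have key : ∀ n s, stateDist D T π n s
      = (1 - γ) * stateDist p₀ T π n s + γ * stateDist D T π (n + 1) s := by
    intro n
    induction n with
    | zero => intro s; simpa [stateDist] using hflow' s
    | succ n ih =>
      intro s
      show (∑ s', ∑ a', stateDist D T π n s' * π s' a' * T s' a' s) = _
      have hrhs : (1 - γ) * stateDist p₀ T π (n + 1) s + γ * stateDist D T π (n + 2) s
          = ∑ s', ∑ a', ((1 - γ) * (stateDist p₀ T π n s' * π s' a' * T s' a' s)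
            + γ * (stateDist D T π (n + 1) s' * π s' a' * T s' a' s)) := by
        simp only [stateDist, Finset.mul_sum, Finset.sum_add_distrib]
      rw [hrhs]
      refine Finset.sum_congr rfl fun s' _ => Finset.sum_congr rfl fun a' _ => ?_
      rw [ih s']; ring
  have part : ∀ n s, D s
      = (1 - γ) * ∑ t ∈ Finset.range n, γ ^ t * stateDist p₀ T π t s
        + γ ^ n * stateDist D T π n s := by
    intro n s
    induction n with
    | zero => simp [stateDist]
    | succ n ih =>
      rw [ih, key n s, Finset.sum_range_succ]
      ring
  -- nonnegativity
  have hρ0 : ∀ (w : S → ℝ), (∀ s, 0 ≤ w s) → ∀ n s, 0 ≤ stateDist w T π n s := by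
    intro w hw n
    induction n with
    | zero => exact hw
    | succ n ih =>
      intro s
      exact Finset.sum_nonneg fun s' _ => Finset.sum_nonneg fun a' _ =>
        mul_nonneg (mul_nonneg (ih s') (hπ0 s' a')) (hT s' a' s)
  -- total mass preserved
  have hρsum : ∀ (w : S → ℝ) n, ∑ s, stateDist w T π n s = ∑ s, w s := by
    intro w n
    induction n with
    | zero => rfl
    | succ n ih =>
      calc ∑ s', stateDist w T π (n + 1) s'
          = ∑ s', ∑ s, ∑ a, stateDist w T π n s * π s a * T s a s' := rfl
        _ = ∑ s, ∑ a, ∑ s', stateDist w T π n s * π s a * T s a s' := by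
            rw [Finset.sum_comm]
            exact Finset.sum_congr rfl fun s _ => Finset.sum_comm
        _ = ∑ s, ∑ a, stateDist w T π n s * π s a := by
            refine Finset.sum_congr rfl fun s _ => Finset.sum_congr rfl fun a _ => ?_
            rw [← Finset.mul_sum, hTsum s a, mul_one]
        _ = ∑ s, stateDist w T π n s := by
            refine Finset.sum_congr rfl fun s _ => ?_
            rw [← Finset.mul_sum, hπsum s, mul_one]
        _ = ∑ s, w s := ih
  have hD0 : ∀ s, 0 ≤ D s := fun s => (hDpos s).le
  set C : ℝ := ∑ s, D s with hCdef
  have hbound : ∀ n s, stateDist D T π n s ≤ C := by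
    intro n s
    calc stateDist D T π n s
        ≤ ∑ s', stateDist D T π n s' :=
          Finset.single_le_sum (fun s' _ => hρ0 D hD0 n s') (Finset.mem_univ s)
      _ = C := hρsum D n
  -- tail tends to 0
  have htail : ∀ s, Filter.Tendsto (fun n => γ ^ n * stateDist D T π n s)
      Filter.atTop (nhds 0) := by
    intro s
    have h1 : Filter.Tendsto (fun n : ℕ => γ ^ n * C) Filter.atTop (nhds 0) := by
      simpa using (tendsto_pow_atTop_nhds_zero_of_lt_one hγ0 hγ1).mul_const C
    refine squeeze_zero (fun n => mul_nonneg (pow_nonneg hγ0 n) (hρ0 D hD0 n s)) ?_ h1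
    intro n
    exact mul_le_mul_of_nonneg_left (hbound n s) (pow_nonneg hγ0 n)
  -- the key HasSum
  have hsum : ∀ s, HasSum (fun t => (1 - γ) * (γ ^ t * stateDist p₀ T π t s)) (D s) := by
    intro s
    have hnn : ∀ t : ℕ, 0 ≤ (1 - γ) * (γ ^ t * stateDist p₀ T π t s) := fun t =>
      mul_nonneg (by linarith) (mul_nonneg (pow_nonneg hγ0 t) (hρ0 p₀ hp₀ t s))
    rw [hasSum_iff_tendsto_nat_of_nonneg hnn]
    have heq : ∀ n : ℕ, ∑ t ∈ Finset.range n, (1 - γ) * (γ ^ t * stateDist p₀ T π t s)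
        = D s - γ ^ n * stateDist D T π n s := by
      intro n
      rw [← Finset.mul_sum]
      have := part n s
      linarith
    simp only [heq]
    simpa using tendsto_const_nhds.sub (htail s)
  intro s a
  have h1γ : (1 - γ) ≠ 0 := by linarith
  have hsum2 : HasSum (fun t => γ ^ t * stateDist p₀ T π t s * π s a)
      (D s / (1 - γ) * π s a) := by
    have h := ((hsum s).mul_left (1 - γ)⁻¹).mul_right (π s a)
    have heq : (fun t => (1 - γ)⁻¹ * ((1 - γ) * (γ ^ t * stateDist p₀ T π t s)) * π s a)
        = fun t => γ ^ t * stateDist p₀ T π t s * π s a := by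
      funext t
      field_simp
    rw [heq] at h
    convert h using 1
    · rfl
    ring
  rw [occMeasure, hsum2.tsum_eq]
  rw [hdeq s a]
  field_simp
end
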